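/- Let s ≥ 0 and n ≥ 1 be integers and let ℓ_1, …, ℓ_n ∈ ℝ[x,y] be homogeneous linear forms that are pairwise non-proportional. Then the dimension of the ℝ-linear span of {ℓ_1^s, ℓ_2^s, …, ℓ_n^s} equals min(s+1, n). -/
import Mathlib

open MvPolynomial

noncomputable section

/-- Bivariate real polynomials. -/
abbrev Pol := MvPolynomial (Fin 2) ℝ

open Finset

lemma vand {n : ℕ} (r d : Fin n → ℝ) (hr : Function.Injective r)
    (h : ∀ k < n, ∑ i, d i * r i ^ k = 0) : ∀ j, d j = 0 := by
  intro j
  set p : Polynomial ℝ := ∏ i ∈ univ.erase j, (Polynomial.X - Polynomial.C (r i)) with hp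
  have hdeg : p.natDegree < n := by
    have : p.natDegree ≤ (univ.erase j).card := by
      apply le_trans (Polynomial.natDegree_prod_le _ _)
      apply le_trans (Finset.sum_le_card_nsmul _ _ 1 ?_) (by simp)
      intro i _
      exact Polynomial.natDegree_X_sub_C_le _
    have := Finset.card_erase_lt_of_mem (Finset.mem_univ j)
    simp only [Finset.card_univ, Fintype.card_fin] at this
    omega
  have hsum : ∑ i, d i * p.eval (r i) = 0 := by
    have heval : ∀ x : ℝ, p.eval x = ∑ k ∈ range n, p.coeff k * x ^ k := by
      intro x
      rw [Polynomial.eval_eq_sum_range' (lt_of_lt_of_le hdeg le_rfl)]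
    calc ∑ i, d i * p.eval (r i) = ∑ i, ∑ k ∈ range n, p.coeff k * (d i * r i ^ k) := by
          refine Finset.sum_congr rfl fun i _ => ?_
          rw [heval, Finset.mul_sum]
          exact Finset.sum_congr rfl fun k _ => by ring
      _ = ∑ k ∈ range n, p.coeff k * ∑ i, d i * r i ^ k := by
          rw [Finset.sum_comm]
          exact Finset.sum_congr rfl fun k _ => by rw [Finset.mul_sum]
      _ = 0 := by
          refine Finset.sum_eq_zero fun k hk => ?_
          rw [h k (Finset.mem_range.mp hk), mul_zero]
  have hzero : ∀ i ∈ univ.erase j, p.eval (r i) = 0 := by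
    intro i hi
    rw [hp, Polynomial.eval_prod]
    exact Finset.prod_eq_zero hi (by simp)
  rw [Finset.sum_eq_single j (fun i _ hi => by rw [hzero i (Finset.mem_erase.mpr ⟨hi, Finset.mem_univ i⟩), mul_zero]) (by simp)] at hsum
  have hpj : p.eval (r j) ≠ 0 := by
    rw [hp, Polynomial.eval_prod]
    refine Finset.prod_ne_zero_iff.mpr fun i hi => ?_
    simp only [Polynomial.eval_sub, Polynomial.eval_X, Polynomial.eval_C, sub_ne_zero]
    exact fun hrr => (Finset.mem_erase.mp hi).1 (hr hrr.symm)
  exact (mul_eq_zero.mp hsum).resolve_right hpj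

lemma key {s n : ℕ} (hns : n ≤ s + 1) (a b : Fin n → ℝ)
    (hcross : ∀ i j, i ≠ j → a i * b j - a j * b i ≠ 0)
    (hne : ∀ i, a i ≠ 0 ∨ b i ≠ 0)
    (c : Fin n → ℝ) (h : ∀ k ≤ s, ∑ i, c i * a i ^ k * b i ^ (s - k) = 0) :
    ∀ j, c j = 0 := by
  -- choose t with t * a i + b i ≠ 0 for all i
  obtain ⟨t, ht⟩ : ∃ t : ℝ, ∀ i, t * a i + b i ≠ 0 := by
    obtain ⟨t, ht⟩ := Infinite.exists_notMem_finset
      (Finset.image (fun i => -(b i) / a i) (Finset.univ.filter fun i => a i ≠ 0))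
    refine ⟨t, fun i => ?_⟩
    rcases eq_or_ne (a i) 0 with h0 | h0
    · rw [h0, mul_zero, zero_add]
      exact (hne i).resolve_left (by simp [h0])
    · intro hc
      exact ht (Finset.mem_image.mpr ⟨i, by simp [h0], by field_simp; linarith⟩)
  set b' : Fin n → ℝ := fun i => t * a i + b i with hb'
  have hb'ne : ∀ i, b' i ≠ 0 := ht
  -- transformed moment conditions
  have h' : ∀ k ≤ s, ∑ i, c i * a i ^ k * b' i ^ (s - k) = 0 := by
    intro k hk
    have expand : ∀ i : Fin n, c i * a i ^ k * b' i ^ (s - k)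
        = ∑ m ∈ range (s - k + 1), ((s-k).choose m : ℝ) * t ^ m *
            (c i * a i ^ (k + m) * b i ^ (s - (k + m))) := by
      intro i
      rw [hb', add_pow]
      rw [Finset.mul_sum]
      refine Finset.sum_congr rfl fun m hm => ?_
      have hm' : m ≤ s - k := by simpa using Finset.mem_range_succ_iff.mp hm
      have : s - k - m = s - (k + m) := by omega
      rw [this]
      ring
    rw [Finset.sum_congr rfl fun i _ => expand i, Finset.sum_comm]
    refine Finset.sum_eq_zero fun m hm => ?_
    have hm' : m ≤ s - k := Finset.mem_range_succ_iff.mp hm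
    rw [← Finset.mul_sum]
    rw [h (k + m) (by omega), mul_zero]
  -- divide through
  set r : Fin n → ℝ := fun i => a i / b' i with hrdef
  have hrinj : Function.Injective r := by
    intro i j hij
    by_contra hne'
    have h1 : a i * b' j = a j * b' i := (div_eq_div_iff (hb'ne i) (hb'ne j)).mp hij
    simp only [hb'] at h1
    exact hcross i j hne' (by linear_combination h1)
  set d : Fin n → ℝ := fun i => c i * b' i ^ s with hddef
  have hd : ∀ k < n, ∑ i, d i * r i ^ k = 0 := by
    intro k hkn
    have hk : k ≤ s := by omega
    rw [← h' k hk]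
    refine Finset.sum_congr rfl fun i _ => ?_
    have : b' i ^ s = b' i ^ (s - k) * b' i ^ k := by
      rw [← pow_add]; congr 1; omega
    calc d i * r i ^ k = c i * a i ^ k * b' i ^ (s - k) * (b' i ^ k / b' i ^ k) := by
          simp only [hddef, hrdef, div_pow]; rw [this]; ring
      _ = c i * a i ^ k * b' i ^ (s - k) := by
          rw [div_self (pow_ne_zero k (hb'ne i)), mul_one]
  intro j
  have := vand r d hrinj hd j
  rw [hddef] at this
  simp only at this
  rcases mul_eq_zero.mp this with h1 | h2
  · exact h1
  · exact absurd h2 (pow_ne_zero s (hb'ne j))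

lemma coeff_pow (a b : ℝ) (s k : ℕ) (hk : k ≤ s) :
    ((Polynomial.C a * Polynomial.X + Polynomial.C b) ^ s).coeff k
      = a ^ k * b ^ (s - k) * s.choose k := by
  rw [add_pow, Polynomial.finset_sum_coeff]
  have hterm : ∀ j, ((Polynomial.C a * Polynomial.X) ^ j * Polynomial.C b ^ (s - j)
      * (s.choose j : Polynomial ℝ)).coeff k
      = if j = k then a ^ k * b ^ (s - k) * s.choose k else 0 := by
    intro j
    have : (Polynomial.C a * Polynomial.X) ^ j * Polynomial.C b ^ (s - j)
        * (s.choose j : Polynomial ℝ)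
        = Polynomial.C (a ^ j * b ^ (s - j) * s.choose j) * Polynomial.X ^ j := by
      rw [mul_pow, ← Polynomial.C_pow, ← Polynomial.C_pow,
        ← map_natCast (Polynomial.C : ℝ →+* Polynomial ℝ), map_mul, map_mul]
      ring
    rw [this, Polynomial.coeff_C_mul, Polynomial.coeff_X_pow]
    rcases eq_or_ne j k with h | h
    · subst h; simp
    · simp [h, Ne.symm h]
  rw [Finset.sum_congr rfl fun j _ => hterm j,
    Finset.sum_ite_eq' (Finset.range (s + 1)) k fun _ => _]
  simp [Nat.lt_succ_iff.mpr hk]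

lemma extract {s n : ℕ} (a b c : Fin n → ℝ)
    (hsum : ∑ i, c i • ((C (a i) * X 0 + C (b i) * X 1 : Pol)) ^ s = 0) :
    ∀ k ≤ s, ∑ i, c i * a i ^ k * b i ^ (s - k) = 0 := by
  intro k hk
  set P : Polynomial ℝ := ∑ i, Polynomial.C (c i) *
    (Polynomial.C (a i) * Polynomial.X + Polynomial.C (b i)) ^ s with hP
  have hP0 : P = 0 := by
    apply Polynomial.funext
    intro x
    have := congrArg (MvPolynomial.eval fun j : Fin 2 => if j = 0 then x else (1:ℝ)) hsum
    simp only [map_sum, smul_eq_C_mul, map_mul, map_add, map_pow, eval_C, eval_X, map_zero,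
      if_pos rfl] at this
    simpa [hP, Polynomial.eval_finset_sum] using this.trans rfl
  have hcoeff := congrArg (fun q => Polynomial.coeff q k) hP0
  simp only [hP, Polynomial.finset_sum_coeff, Polynomial.coeff_C_mul, Polynomial.coeff_zero] at hcoeff
  rw [Finset.sum_congr rfl fun i _ => by rw [coeff_pow (a i) (b i) s k hk]] at hcoeff
  have hch : (s.choose k : ℝ) ≠ 0 := by
    exact Nat.cast_ne_zero.mpr (Nat.choose_pos hk).ne'
  have : (∑ i, c i * a i ^ k * b i ^ (s - k)) * (s.choose k : ℝ) = 0 := by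
    rw [Finset.sum_mul, ← hcoeff]
    exact Finset.sum_congr rfl fun i _ => by ring
  exact (mul_eq_zero.mp this).resolve_right hch

lemma indep {s n : ℕ} (hns : n ≤ s + 1) (a b : Fin n → ℝ)
    (hne : ∀ i, a i ≠ 0 ∨ b i ≠ 0)
    (hcross : ∀ i j, i ≠ j → a i * b j - a j * b i ≠ 0) :
    LinearIndependent ℝ (fun i => (C (a i) * X 0 + C (b i) * X 1 : Pol) ^ s) := by
  rw [Fintype.linearIndependent_iff]
  intro c hc
  exact key hns a b hcross hne c (extract a b c hc)

lemma mem_W {s : ℕ} (a b : ℝ) :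
    ((C a * X 0 + C b * X 1 : Pol)) ^ s ∈ Submodule.span ℝ
      (Set.range fun k : Fin (s + 1) => (X 0 : Pol) ^ (k : ℕ) * X 1 ^ (s - (k : ℕ))) := by
  rw [add_pow]
  refine Submodule.sum_mem _ fun j hj => ?_
  have hj' : j ≤ s := Finset.mem_range_succ_iff.mp hj
  have hterm : (C a * X 0) ^ j * (C b * X 1) ^ (s - j) * (s.choose j : Pol)
      = (a ^ j * b ^ (s - j) * s.choose j) • ((X 0 : Pol) ^ j * X 1 ^ (s - j)) := by
    rw [smul_eq_C_mul, mul_pow, mul_pow, ← C_pow, ← C_pow,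
      ← map_natCast (C : ℝ →+* Pol), map_mul, map_mul]
    ring
  rw [hterm]
  exact Submodule.smul_mem _ _ (Submodule.subset_span ⟨⟨j, by omega⟩, rfl⟩)

theorem stmt5 (s n : ℕ) (hn : 1 ≤ n) (ℓ : Fin n → Pol)
    (hlin : ∀ i, ∃ a b : ℝ, (a, b) ≠ (0, 0) ∧ ℓ i = C a * X 0 + C b * X 1)
    (hprop : ∀ i j, i ≠ j → ∀ c : ℝ, ℓ i ≠ c • ℓ j) :
    Module.finrank ℝ ↥(Submodule.span ℝ (Set.range fun i => ℓ i ^ s)) =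
      min (s + 1) n := by
  choose a b hab hl using hlin
  have hne : ∀ i, a i ≠ 0 ∨ b i ≠ 0 := by
    intro i
    by_contra hc
    push_neg at hc
    exact hab i (by rw [hc.1, hc.2])
  have hcross : ∀ i j, i ≠ j → a i * b j - a j * b i ≠ 0 := by
    intro i j hij hz
    have hz' : a i * b j = a j * b i := by linarith
    obtain ⟨c, hca, hcb⟩ : ∃ c : ℝ, a i = c * a j ∧ b i = c * b j := by
      rcases hne j with hj | hj
      · refine ⟨a i / a j, by field_simp, ?_⟩
        field_simp
        linear_combination -hz'
      · refine ⟨b i / b j, ?_, by field_simp⟩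
        field_simp
        linear_combination hz'
    refine hprop i j hij c ?_
    rw [hl i, hl j, smul_eq_C_mul, hca, hcb, map_mul, map_mul]
    ring
  have hf : (fun i => ℓ i ^ s) = fun i => (C (a i) * X 0 + C (b i) * X 1 : Pol) ^ s :=
    funext fun i => by rw [hl i]
  rcases le_or_gt n (s + 1) with hns | hns
  · rw [hf, finrank_span_eq_card (indep hns a b hne hcross), Fintype.card_fin,
      min_eq_right hns]
  · rw [min_eq_left (by omega)]
    set W := Submodule.span ℝ
      (Set.range fun k : Fin (s + 1) => (X 0 : Pol) ^ (k : ℕ) * X 1 ^ (s - (k : ℕ))) with hW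
    haveI : FiniteDimensional ℝ W := FiniteDimensional.span_of_finite ℝ (Set.finite_range _)
    haveI : FiniteDimensional ℝ (Submodule.span ℝ (Set.range fun i => ℓ i ^ s)) :=
      FiniteDimensional.span_of_finite ℝ (Set.finite_range _)
    have hupper : Submodule.span ℝ (Set.range fun i => ℓ i ^ s) ≤ W := by
      rw [Submodule.span_le]
      rintro _ ⟨i, rfl⟩
      show ℓ i ^ s ∈ W
      rw [hl i]
      exact mem_W (a i) (b i)
    have hWrank : Module.finrank ℝ W ≤ s + 1 := by
      simpa [Set.finrank, Fintype.card_fin] using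
        finrank_range_le_card (fun k : Fin (s + 1) => (X 0 : Pol) ^ (k : ℕ) * X 1 ^ (s - (k : ℕ)))
    -- lower bound
    have hemb : s + 1 ≤ n := by omega
    set g : Fin (s + 1) → Pol := fun k => ℓ (Fin.castLE hemb k) ^ s with hg
    have hgind : LinearIndependent ℝ g := by
      have := indep (le_refl (s + 1)) (a ∘ Fin.castLE hemb) (b ∘ Fin.castLE hemb)
        (fun i => hne _) (fun i j hij => hcross _ _ (fun h => hij (Fin.castLE_injective hemb h)))
      convert this using 1
      funext k
      rw [hg]
      simp only [Function.comp_apply]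
      rw [hl]
    have hsub : Submodule.span ℝ (Set.range g) ≤ Submodule.span ℝ (Set.range fun i => ℓ i ^ s) := by
      apply Submodule.span_mono
      rintro _ ⟨k, rfl⟩
      exact ⟨Fin.castLE hemb k, rfl⟩
    have hlow : s + 1 ≤ Module.finrank ℝ (Submodule.span ℝ (Set.range fun i => ℓ i ^ s)) := by
      have := Submodule.finrank_mono hsub
      rw [finrank_span_eq_card hgind, Fintype.card_fin] at this
      exact this
    have hup : Module.finrank ℝ (Submodule.span ℝ (Set.range fun i => ℓ i ^ s)) ≤ s + 1 :=
      le_trans (Submodule.finrank_mono hupper) hWrank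
    omega

end
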